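/- arXiv:2102.05174 — 4 statements merged into one kernel-verified Lean document; each statement's English description precedes it below -/
import Mathlib

section
/- Let n ≥ 1 and let S be a stabilizer group of n-qubit signed Pauli matrices. Then the matrix ρ_S := 2^{-n} · Σ_{Q ∈ S} Q is Hermitian, idempotent (ρ_S · ρ_S = ρ_S), has trace 1, and has rank 1; in particular ρ_S is the density matrix of a pure quantum state (a rank-one orthogonal projection). -/
open Matrix

noncomputable section

/-- The four single-qubit Pauli matrices: `I₂`, `X`, `Y`, `Z`. -/
def pauli : Fin 4 → Matrix (Fin 2) (Fin 2) ℂ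
  | 0 => 1
  | 1 => !![0, 1; 1, 0]
  | 2 => !![0, -Complex.I; Complex.I, 0]
  | 3 => !![1, 0; 0, -1]

/-- The `n`-fold Kronecker product `A_{a 0} ⊗ ⋯ ⊗ A_{a (n-1)}` of single-qubit Pauli
matrices, realized as a matrix indexed by bit strings. -/
def pauliTensor {n : ℕ} (a : Fin n → Fin 4) :
    Matrix (Fin n → Fin 2) (Fin n → Fin 2) ℂ :=
  fun z w => ∏ i, pauli (a i) (z i) (w i)


lemma pauli_star (k : Fin 4) (i j : Fin 2) :
    (starRingEnd ℂ) (pauli k j i) = pauli k i j := by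
  fin_cases k <;> fin_cases i <;> fin_cases j <;>
    simp [pauli, Matrix.one_apply]

lemma pauli_mul_self (k : Fin 4) : pauli k * pauli k = 1 := by
  fin_cases k <;> ext i j <;> fin_cases i <;> fin_cases j <;>
    simp [pauli, Matrix.mul_apply, Fin.sum_univ_two, Matrix.one_apply, Complex.I_mul_I]

lemma pauli_trace_eq_zero (k : Fin 4) (hk : k ≠ 0) : (pauli k).trace = 0 := by
  fin_cases k <;> simp_all [pauli, Matrix.trace, Matrix.diag, Fin.sum_univ_two]

lemma prod_one_apply {n : ℕ} (z w : Fin n → Fin 2) :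
    ∏ i, (1 : Matrix (Fin 2) (Fin 2) ℂ) (z i) (w i)
      = (1 : Matrix (Fin n → Fin 2) (Fin n → Fin 2) ℂ) z w := by
  simp only [Matrix.one_apply]
  rw [Fintype.prod_boole]
  congr 1
  simp [funext_iff]

lemma pauliTensor_mul {n : ℕ} (a b : Fin n → Fin 4) :
    pauliTensor a * pauliTensor b
      = fun z w => ∏ i, (pauli (a i) * pauli (b i)) (z i) (w i) := by
  funext z w
  simp only [Matrix.mul_apply, pauliTensor]
  rw [Finset.prod_univ_sum]
  rw [← Fintype.piFinset_univ]
  apply Finset.sum_congr rfl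
  intro y _
  rw [← Finset.prod_mul_distrib]

lemma pauliTensor_mul_self {n : ℕ} (a : Fin n → Fin 4) :
    pauliTensor a * pauliTensor a = 1 := by
  rw [pauliTensor_mul]
  funext z w
  simp only [pauli_mul_self]
  exact prod_one_apply z w

lemma pauliTensor_conjTranspose {n : ℕ} (a : Fin n → Fin 4) :
    (pauliTensor a)ᴴ = pauliTensor a := by
  ext z w
  simp only [conjTranspose_apply, pauliTensor, RCLike.star_def, map_prod]
  exact Finset.prod_congr rfl fun i _ => pauli_star _ _ _

lemma pauliTensor_eq_one {n : ℕ} : pauliTensor (fun _ : Fin n => (0 : Fin 4)) = 1 := by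
  funext z w
  simp only [pauliTensor, pauli]
  exact prod_one_apply z w

lemma trace_pauliTensor {n : ℕ} (a : Fin n → Fin 4) :
    (pauliTensor a).trace = ∏ i, (pauli (a i)).trace := by
  simp only [Matrix.trace, Matrix.diag, pauliTensor]
  rw [Finset.prod_univ_sum, ← Fintype.piFinset_univ]

/-- A signed `n`-qubit Pauli matrix: `ε • (A₁ ⊗ ⋯ ⊗ Aₙ)` with `ε ∈ {1, -1}`. -/
def IsSignedPauli {n : ℕ} (M : Matrix (Fin n → Fin 2) (Fin n → Fin 2) ℂ) : Prop :=
  ∃ (ε : ℂ) (a : Fin n → Fin 4), (ε = 1 ∨ ε = -1) ∧ M = ε • pauliTensor a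

/-- A stabilizer group: a set of signed `n`-qubit Pauli matrices containing the identity,
closed under multiplication, pairwise commuting, not containing `-I`, of size `2^n`. -/
structure IsStabilizerGroup (n : ℕ)
    (S : Set (Matrix (Fin n → Fin 2) (Fin n → Fin 2) ℂ)) : Prop where
  mem_pauli : ∀ M ∈ S, IsSignedPauli M
  one_mem : (1 : Matrix (Fin n → Fin 2) (Fin n → Fin 2) ℂ) ∈ S
  mul_mem : ∀ M ∈ S, ∀ N ∈ S, M * N ∈ S
  mul_comm : ∀ M ∈ S, ∀ N ∈ S, M * N = N * M
  neg_one_not_mem : -(1 : Matrix (Fin n → Fin 2) (Fin n → Fin 2) ℂ) ∉ S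
  card_eq : S.ncard = 2 ^ n

/-- The stabilizer state associated to a stabilizer group: `ρ_S = 2^{-n} Σ_{Q ∈ S} Q`. -/
def stabState {n : ℕ} (S : Set (Matrix (Fin n → Fin 2) (Fin n → Fin 2) ℂ)) :
    Matrix (Fin n → Fin 2) (Fin n → Fin 2) ℂ :=
  ((2 : ℂ) ^ n)⁻¹ • ∑ᶠ Q ∈ S, Q

/-- The stabilizer state `ρ_S = 2^{-n} Σ_{Q ∈ S} Q` of a stabilizer group `S` is Hermitian,
idempotent, of trace `1` and of rank `1`: it is the density matrix of a pure quantum state. -/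

theorem stabState_isPure {n : ℕ} (hn : 1 ≤ n)
    (S : Set (Matrix (Fin n → Fin 2) (Fin n → Fin 2) ℂ))
    (hS : IsStabilizerGroup n S) :
    (stabState S).IsHermitian ∧
      stabState S * stabState S = stabState S ∧
      (stabState S).trace = 1 ∧
      (stabState S).rank = 1 := by
  classical
  have h2n : ((2 : ℂ) ^ n) ≠ 0 := pow_ne_zero n two_ne_zero
  have hfin : S.Finite := by
    rcases Set.finite_or_infinite S with h | h
    · exact h
    · exfalso
      have h0 := h.ncard
      rw [hS.card_eq] at h0
      exact (pow_ne_zero n two_ne_zero) h0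
  set F : Finset _ := hfin.toFinset with hF
  have hmem : ∀ Q, Q ∈ F ↔ Q ∈ S := fun Q => hfin.mem_toFinset
  have hcard : F.card = 2 ^ n := by
    rw [← Set.ncard_eq_toFinset_card S hfin]; exact hS.card_eq
  have hsum : stabState S = ((2 : ℂ) ^ n)⁻¹ • ∑ Q ∈ F, Q := by
    rw [stabState, ← hfin.coe_toFinset, finsum_mem_coe_finset]
  have hsq : ∀ Q ∈ S, Q * Q = 1 := by
    intro Q hQ
    obtain ⟨ε, a, hε, rfl⟩ := hS.mem_pauli Q hQ
    rw [Matrix.smul_mul, Matrix.mul_smul, smul_smul, pauliTensor_mul_self]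
    rcases hε with rfl | rfl <;> norm_num
  have hherm : ∀ Q ∈ S, Qᴴ = Q := by
    intro Q hQ
    obtain ⟨ε, a, hε, rfl⟩ := hS.mem_pauli Q hQ
    rw [conjTranspose_smul, pauliTensor_conjTranspose]
    rcases hε with rfl | rfl <;> simp
  have hone : (1 : Matrix (Fin n → Fin 2) (Fin n → Fin 2) ℂ) ∈ F := (hmem 1).2 hS.one_mem
  -- Hermitian
  have hH : (stabState S).IsHermitian := by
    rw [hsum, Matrix.IsHermitian, conjTranspose_smul, Matrix.conjTranspose_sum,
      Finset.sum_congr rfl fun Q hQ => hherm Q ((hmem Q).1 hQ)]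
    congr 1
    simp
  -- idempotent
  have hmul_sum : ∀ Q ∈ F, ∑ N ∈ F, Q * N = ∑ N ∈ F, N := by
    intro Q hQ
    have hQS := (hmem Q).1 hQ
    refine Finset.sum_nbij' (i := fun N => Q * N) (j := fun N => Q * N) ?_ ?_ ?_ ?_ ?_
    · intro N hN
      exact (hmem _).2 (hS.mul_mem Q hQS N ((hmem N).1 hN))
    · intro N hN
      exact (hmem _).2 (hS.mul_mem Q hQS N ((hmem N).1 hN))
    · intro N _
      show Q * (Q * N) = N
      rw [← Matrix.mul_assoc, hsq Q hQS, Matrix.one_mul]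
    · intro N _
      show Q * (Q * N) = N
      rw [← Matrix.mul_assoc, hsq Q hQS, Matrix.one_mul]
    · intro N _
      rfl
  have hid : stabState S * stabState S = stabState S := by
    rw [hsum, Matrix.smul_mul, Matrix.mul_smul, smul_smul, Finset.sum_mul_sum,
      Finset.sum_congr rfl hmul_sum, Finset.sum_const, hcard,
      ← Nat.cast_smul_eq_nsmul ℂ, smul_smul]
    congr 1
    push_cast
    field_simp
  -- trace
  have htr0 : ∀ Q ∈ S, Q ≠ 1 → Q.trace = 0 := by
    intro Q hQ hQ1
    obtain ⟨ε, a, hε, rfl⟩ := hS.mem_pauli Q hQ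
    by_cases ha : ∀ i, a i = 0
    · exfalso
      have haz : a = fun _ => 0 := funext ha
      rw [haz, pauliTensor_eq_one] at hQ hQ1
      rcases hε with rfl | rfl
      · exact hQ1 (one_smul _ _)
      · exact hS.neg_one_not_mem (by simpa using hQ)
    · push_neg at ha
      obtain ⟨i, hi⟩ := ha
      rw [Matrix.trace_smul, trace_pauliTensor,
        Finset.prod_eq_zero (Finset.mem_univ i) (pauli_trace_eq_zero _ hi)]
      simp
  have htrsum : ∑ Q ∈ F, Q.trace = (2 : ℂ) ^ n := by
    rw [Finset.sum_eq_single_of_mem 1 hone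
      (fun Q hQ hne => htr0 Q ((hmem Q).1 hQ) hne), Matrix.trace_one]
    simp
  have htr : (stabState S).trace = 1 := by
    rw [hsum, Matrix.trace_smul, Matrix.trace_sum, htrsum, smul_eq_mul,
      inv_mul_cancel₀ h2n]
  refine ⟨hH, hid, htr, ?_⟩
  -- rank
  set U : Matrix (Fin n → Fin 2) (Fin n → Fin 2) ℂ := (hH.eigenvectorUnitary : Matrix (Fin n → Fin 2) (Fin n → Fin 2) ℂ) with hU
  have hUU : star U * U = 1 := Unitary.coe_star_mul_self _
  have hUU' : U * star U = 1 := Unitary.coe_mul_star_self _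
  have hdiag : star U * stabState S * U = diagonal (RCLike.ofReal ∘ hH.eigenvalues) := by
    have := hH.conjStarAlgAut_star_eigenvectorUnitary
    rw [Unitary.conjStarAlgAut_apply] at this
    simpa [hU] using this
  have heig01 : ∀ i, hH.eigenvalues i = 0 ∨ hH.eigenvalues i = 1 := by
    intro i
    have hassoc : (star U * stabState S * U) * (star U * stabState S * U)
        = star U * (stabState S * (U * star U) * stabState S) * U := by noncomm_ring
    have hDD : (diagonal (RCLike.ofReal ∘ hH.eigenvalues) : Matrix (Fin n → Fin 2) (Fin n → Fin 2) ℂ)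
        * diagonal (RCLike.ofReal ∘ hH.eigenvalues)
        = diagonal (RCLike.ofReal ∘ hH.eigenvalues) := by
      rw [← hdiag, hassoc, hUU', Matrix.mul_one, hid]
    rw [Matrix.diagonal_mul_diagonal] at hDD
    have h := congrFun (congrFun hDD i) i
    simp only [Matrix.diagonal_apply_eq, Pi.mul_apply, Function.comp_apply] at h
    have h' : hH.eigenvalues i * hH.eigenvalues i = hH.eigenvalues i := by
      exact_mod_cast h
    rcases mul_self_eq_zero.mp (by ring_nf; nlinarith [h'] : (hH.eigenvalues i) * (hH.eigenvalues i - 1) * ((hH.eigenvalues i) * (hH.eigenvalues i - 1)) = 0) with h''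
    rcases mul_eq_zero.mp h'' with h0 | h1
    · exact Or.inl h0
    · exact Or.inr (by linarith)
  have htrsum_eig : ∑ i, hH.eigenvalues i = 1 := by
    have h1 : (stabState S).trace
        = Matrix.trace (diagonal (RCLike.ofReal ∘ hH.eigenvalues) : Matrix (Fin n → Fin 2) (Fin n → Fin 2) ℂ) := by
      conv_lhs => rw [hH.spectral_theorem]
      rw [Unitary.conjStarAlgAut_apply, Matrix.trace_mul_cycle, Unitary.coe_star_mul_self, Matrix.one_mul]
    rw [htr, Matrix.trace_diagonal] at h1
    have h2 : ((∑ i, hH.eigenvalues i : ℝ) : ℂ) = 1 := by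
      push_cast
      exact h1.symm
    exact_mod_cast h2
  rw [hH.rank_eq_card_non_zero_eigs, Fintype.card_subtype]
  have hsum' : ∑ i ∈ Finset.univ.filter (fun i => hH.eigenvalues i ≠ 0), hH.eigenvalues i
      = 1 := by
    rw [Finset.sum_filter_ne_zero]
    exact htrsum_eig
  have hall : ∀ i ∈ Finset.univ.filter (fun i => hH.eigenvalues i ≠ 0),
      hH.eigenvalues i = 1 := fun i hi =>
    (heig01 i).resolve_left (Finset.mem_filter.1 hi).2
  rw [Finset.sum_congr rfl hall, Finset.sum_const, nsmul_eq_mul, mul_one] at hsum'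
  exact_mod_cast hsum'
end
end

section
/- Let n ≥ 1 and let S and S' be two stabilizer groups of n-qubit signed Pauli matrices with S ≠ S'. Then the intersection S ∩ S' has at most 2^{n−1} elements. -/
open Matrix

noncomputable section

lemma signed_pauli_sq {n : ℕ} {M : Matrix (Fin n → Fin 2) (Fin n → Fin 2) ℂ}
    (h : IsSignedPauli M) : M * M = 1 := by
  obtain ⟨ε, a, hε, rfl⟩ := h
  have : ε * ε = 1 := by rcases hε with h | h <;> rw [h] <;> ring
  rw [Matrix.smul_mul, Matrix.mul_smul, smul_smul, this, one_smul,
    pauliTensor_mul_self]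

/-- Two distinct stabilizer groups of `n`-qubit signed Pauli matrices intersect in at most
`2^{n-1}` elements. -/
theorem stabilizer_intersection {n : ℕ} (hn : 1 ≤ n)
    (S S' : Set (Matrix (Fin n → Fin 2) (Fin n → Fin 2) ℂ))
    (hS : IsStabilizerGroup n S) (hS' : IsStabilizerGroup n S') (hne : S ≠ S') :
    (S ∩ S').ncard ≤ 2 ^ (n - 1) := by
  have hSfin : S.Finite := by
    by_contra h
    have := hS.card_eq
    rw [Set.Infinite.ncard (by simpa using h)] at this
    exact absurd this.symm (by positivity)
  have hS'fin : S'.Finite := by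
    by_contra h
    have := hS'.card_eq
    rw [Set.Infinite.ncard (by simpa using h)] at this
    exact absurd this.symm (by positivity)
  -- there is Q ∈ S with Q ∉ S'
  have hQ : ∃ Q ∈ S, Q ∉ S' := by
    by_contra h
    push_neg at h
    exact hne (Set.eq_of_subset_of_ncard_le h
      (by rw [hS.card_eq, hS'.card_eq]) hS'fin)
  obtain ⟨Q, hQS, hQS'⟩ := hQ
  set T := S ∩ S' with hT
  have hTsubS : T ⊆ S := Set.inter_subset_left
  -- the map M ↦ Q * M sends T injectively into S \ T
  have hmaps : ∀ M ∈ T, Q * M ∈ S \ T := by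
    intro M hM
    refine ⟨hS.mul_mem Q hQS M (hTsubS hM), ?_⟩
    intro hmem
    apply hQS'
    have hMS' : M ∈ S' := hM.2
    have : (Q * M) * M ∈ S' := hS'.mul_mem _ hmem.2 M hMS'
    rwa [mul_assoc, signed_pauli_sq (hS'.mem_pauli M hMS'), mul_one] at this
  have hinj : Set.InjOn (fun M => Q * M) T := by
    intro M hM N hN h
    have hQQ : Q * Q = 1 := signed_pauli_sq (hS.mem_pauli Q hQS)
    have : Q * (Q * M) = Q * (Q * N) := congrArg (Q * ·) h
    rwa [← mul_assoc, ← mul_assoc, hQQ, one_mul, one_mul] at this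
  have hle : T.ncard ≤ (S \ T).ncard :=
    Set.ncard_le_ncard_of_injOn _ hmaps hinj hSfin.diff
  have hdiff : (S \ T).ncard = S.ncard - T.ncard :=
    Set.ncard_diff hTsubS (hSfin.subset hTsubS)
  have hTle : T.ncard ≤ S.ncard := Set.ncard_le_ncard hTsubS hSfin
  have h2n : (2 : ℕ) ^ n = 2 ^ (n - 1) * 2 := by
    rw [← pow_succ]
    congr 1
    omega
  rw [hS.card_eq] at hdiff hTle
  omega
end
end

section
/- Let n ≥ 1, let S and S' be stabilizer groups of n-qubit signed Pauli matrices, and let ρ_S := 2^{-n} Σ_{Q ∈ S} Q and ρ_{S'} := 2^{-n} Σ_{Q ∈ S'} Q. Writing −S' := {−Q : Q ∈ S'}, one has (1/(2·4^n)) · Σ_{(ε,a)} tr(P_{ε,a} · ρ_S) · tr(P_{ε,a} · ρ_{S'}) = 4^{-n} · (|S ∩ S'| − |S ∩ (−S')|), where the sum ranges over all pairs (ε,a) with ε ∈ {1,−1} and a : Fin n → Fin 4. -/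
open Matrix

noncomputable section

lemma pauli_mul_trace (j k : Fin 4) :
    (pauli j * pauli k).trace = if j = k then 2 else 0 := by
  fin_cases j <;> fin_cases k <;>
    simp [pauli, Matrix.one_fin_two, Matrix.trace_fin_two, Matrix.mul_apply,
      Fin.sum_univ_two, Complex.I_mul_I] <;> ring_nf

lemma pauliTensor_mul_trace {n : ℕ} (a b : Fin n → Fin 4) :
    (pauliTensor a * pauliTensor b).trace = ∏ i, (pauli (a i) * pauli (b i)).trace := by
  have h1 : ∀ j k : Fin 4, (pauli j * pauli k).trace
      = ∑ p : Fin 2 × Fin 2, pauli j p.1 p.2 * pauli k p.2 p.1 := by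
    intro j k
    rw [Fintype.sum_prod_type]
    simp [Matrix.trace, Matrix.diag, Matrix.mul_apply]
  simp_rw [h1]
  rw [Fintype.prod_sum]
  rw [← Equiv.sum_comp (Equiv.arrowProdEquivProdArrow (Fin n) (fun _ => Fin 2) (fun _ => Fin 2)).symm]
  rw [Fintype.sum_prod_type]
  simp only [Matrix.trace, Matrix.diag, Matrix.mul_apply, pauliTensor,
    Equiv.arrowProdEquivProdArrow, Equiv.coe_fn_mk]
  refine Finset.sum_congr rfl fun z _ => Finset.sum_congr rfl fun y _ => ?_
  rw [← Finset.prod_mul_distrib]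
  rfl

lemma pauliTensor_orth {n : ℕ} (a b : Fin n → Fin 4) :
    (pauliTensor a * pauliTensor b).trace = if a = b then (2:ℂ)^n else 0 := by
  rw [pauliTensor_mul_trace]
  simp_rw [pauli_mul_trace]
  by_cases h : a = b
  · subst h; simp
  · rw [if_neg h]
    obtain ⟨i, hi⟩ := Function.ne_iff.mp h
    exact Finset.prod_eq_zero (Finset.mem_univ i) (if_neg hi)

lemma pauliTensor_ne_zero {n : ℕ} (b : Fin n → Fin 4) : pauliTensor b ≠ 0 := by
  intro h
  have h1 := pauliTensor_orth b b
  rw [h, zero_mul, Matrix.trace_zero, if_pos rfl] at h1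
  exact (pow_ne_zero n two_ne_zero) h1.symm

lemma pauliTensor_ne {n : ℕ} {b c : Fin n → Fin 4} (h : b ≠ c) (τ : ℂ) (hτ : τ = 1 ∨ τ = -1) :
    pauliTensor b ≠ τ • pauliTensor c := by
  intro heq
  have h1 := pauliTensor_orth b b
  rw [if_pos rfl] at h1
  nth_rewrite 2 [heq] at h1
  rw [Matrix.mul_smul, Matrix.trace_smul, pauliTensor_orth b c, if_neg h, smul_zero] at h1
  exact (pow_ne_zero n two_ne_zero) h1.symm

lemma trace_signed_mul {n : ℕ} {Q Q' : Matrix (Fin n → Fin 2) (Fin n → Fin 2) ℂ}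
    (hQ : IsSignedPauli Q) (hQ' : IsSignedPauli Q') :
    (Q * Q').trace = if Q = Q' then (2:ℂ)^n else if Q = -Q' then -((2:ℂ)^n) else 0 := by
  obtain ⟨ε, b, hε, rfl⟩ := hQ
  obtain ⟨ε', c, hε', rfl⟩ := hQ'
  rw [Matrix.smul_mul, Matrix.mul_smul, Matrix.trace_smul, Matrix.trace_smul,
    pauliTensor_orth, smul_eq_mul, smul_eq_mul]
  by_cases hbc : b = c
  · subst hbc
    rw [if_pos rfl]
    have hPb := pauliTensor_ne_zero b
    have hne : pauliTensor b ≠ -pauliTensor b := by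
      intro h
      apply hPb
      have h2 : (2:ℂ) • pauliTensor b = 0 := by
        rw [two_smul]; nth_rewrite 2 [h]; simp
      simpa using (smul_eq_zero.mp h2).resolve_left two_ne_zero
    have hne' : -pauliTensor b ≠ pauliTensor b := fun h => hne h.symm
    rcases hε with rfl | rfl <;> rcases hε' with rfl | rfl <;>
      simp [hne, hne']
  · rw [if_neg hbc, mul_zero]
    have hA : pauliTensor b ≠ pauliTensor c := by
      have := pauliTensor_ne hbc 1 (Or.inl rfl); rwa [one_smul] at this
    have hB : pauliTensor b ≠ -pauliTensor c := by
      have := pauliTensor_ne hbc (-1) (Or.inr rfl); rwa [neg_smul, one_smul] at this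
    have hC : -pauliTensor b ≠ pauliTensor c := fun h => hB (neg_eq_iff_eq_neg.mp h)
    have hD : -pauliTensor b ≠ -pauliTensor c := fun h => hA (neg_injective h)
    rcases hε with rfl | rfl <;> rcases hε' with rfl | rfl <;>
      simp [hA, hB, hC, hD]

lemma signed_ne_zero {n : ℕ} {Q : Matrix (Fin n → Fin 2) (Fin n → Fin 2) ℂ}
    (hQ : IsSignedPauli Q) : Q ≠ 0 := by
  obtain ⟨ε, b, hε, rfl⟩ := hQ
  intro h
  rcases smul_eq_zero.mp h with h | h
  · rcases hε with rfl | rfl <;> norm_num at h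
  · exact pauliTensor_ne_zero b h

lemma signed_neg_ne {n : ℕ} {Q : Matrix (Fin n → Fin 2) (Fin n → Fin 2) ℂ}
    (hQ : IsSignedPauli Q) : -Q ≠ Q := by
  intro h
  apply signed_ne_zero hQ
  have h2 : (2:ℂ) • Q = 0 := by rw [two_smul]; nth_rewrite 1 [← h]; simp
  simpa using (smul_eq_zero.mp h2).resolve_left two_ne_zero

lemma sum_trace_mul {n : ℕ} {Q Q' : Matrix (Fin n → Fin 2) (Fin n → Fin 2) ℂ}
    (hQ : IsSignedPauli Q) (hQ' : IsSignedPauli Q') :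
    ∑ a : Fin n → Fin 4, (pauliTensor a * Q).trace * (pauliTensor a * Q').trace
      = (2:ℂ)^n * (Q * Q').trace := by
  obtain ⟨ε, b, hε, rfl⟩ := hQ
  obtain ⟨ε', c, hε', rfl⟩ := hQ'
  simp_rw [Matrix.mul_smul, Matrix.smul_mul, Matrix.trace_smul, smul_eq_mul, pauliTensor_orth]
  have hpt : ∀ a : Fin n → Fin 4,
      (ε * (if a = b then (2:ℂ)^n else 0)) * (ε' * (if a = c then (2:ℂ)^n else 0))
      = if a = b then (ε * (ε' * (if b = c then ((2:ℂ)^n)*(2:ℂ)^n else 0))) else 0 := by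
    intro a
    by_cases h1 : a = b
    · subst h1
      by_cases h2 : a = c <;> simp [h2] <;> ring
    · simp [h1]
  rw [Finset.sum_congr rfl fun a _ => hpt a, Finset.sum_ite_eq']
  by_cases h2 : b = c
  · simp [h2]; ring
  · simp [h2]

/-- Correlation of two stabilizer states under the uniform distribution on Pauli
measurements, in terms of stabilizer-group intersections:
`(1/(2·4^n)) Σ_{(ε,a)} tr(P_{ε,a} ρ_S)·tr(P_{ε,a} ρ_{S'}) = 4^{-n}(|S ∩ S'| − |S ∩ (−S')|)`. -/
theorem stabState_correlation_eq {n : ℕ} (hn : 1 ≤ n)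
    (S S' : Set (Matrix (Fin n → Fin 2) (Fin n → Fin 2) ℂ))
    (hS : IsStabilizerGroup n S) (hS' : IsStabilizerGroup n S') :
    (1 / (2 * 4 ^ n) : ℂ) *
        ∑ ε ∈ ({1, -1} : Finset ℂ), ∑ a : Fin n → Fin 4,
          ((ε • pauliTensor a) * stabState S).trace *
            ((ε • pauliTensor a) * stabState S').trace =
      ((4 : ℂ) ^ n)⁻¹ *
        (((S ∩ S').ncard : ℂ) - ((S ∩ ((fun Q => -Q) '' S')).ncard : ℂ)) := by
  classical
  have h2 : (2:ℂ)^n ≠ 0 := pow_ne_zero n two_ne_zero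
  have hSfin : S.Finite := Set.finite_of_ncard_ne_zero (by rw [hS.card_eq]; positivity)
  have hS'fin : S'.Finite := Set.finite_of_ncard_ne_zero (by rw [hS'.card_eq]; positivity)
  set Fs := hSfin.toFinset with hFs
  set Fs' := hS'fin.toFinset with hFs'
  have hmemS : ∀ Q ∈ Fs, IsSignedPauli Q :=
    fun Q hQ => hS.mem_pauli Q (hSfin.mem_toFinset.mp hQ)
  have hmemS' : ∀ Q ∈ Fs', IsSignedPauli Q :=
    fun Q hQ => hS'.mem_pauli Q (hS'fin.mem_toFinset.mp hQ)
  -- trace against a state as a finset sum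
  have htr : ∀ (a : Fin n → Fin 4) (T : Set (Matrix (Fin n → Fin 2) (Fin n → Fin 2) ℂ))
      (hT : T.Finite),
      (pauliTensor a * stabState T).trace
        = ((2:ℂ)^n)⁻¹ * ∑ Q ∈ hT.toFinset, (pauliTensor a * Q).trace := by
    intro a T hT
    rw [stabState, finsum_mem_eq_finite_toFinset_sum _ hT, Matrix.mul_smul,
      Matrix.trace_smul, Matrix.mul_sum, Matrix.trace_sum, smul_eq_mul]
  -- the per-a expansion
  have hmid : ∀ a : Fin n → Fin 4,
      (pauliTensor a * stabState S).trace * (pauliTensor a * stabState S').trace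
        = (((2:ℂ)^n)⁻¹ * ((2:ℂ)^n)⁻¹) *
            ∑ Q ∈ Fs, ∑ Q' ∈ Fs', (pauliTensor a * Q).trace * (pauliTensor a * Q').trace := by
    intro a
    rw [htr a S hSfin, htr a S' hS'fin, ← Finset.sum_mul_sum]
    ring
  -- swap sums and use orthogonality
  have hsum2 : ∑ a : Fin n → Fin 4, ∑ Q ∈ Fs, ∑ Q' ∈ Fs',
      (pauliTensor a * Q).trace * (pauliTensor a * Q').trace
      = ∑ Q ∈ Fs, ∑ Q' ∈ Fs', (2:ℂ)^n * (Q * Q').trace := by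
    rw [Finset.sum_comm]
    refine Finset.sum_congr rfl fun Q hQ => ?_
    rw [Finset.sum_comm]
    exact Finset.sum_congr rfl fun Q' hQ' => sum_trace_mul (hmemS Q hQ) (hmemS' Q' hQ')
  -- counting
  set c₁ := ((Fs.filter (· ∈ Fs')).card : ℂ) with hc₁
  set c₂ := ((Fs.filter (fun Q => -Q ∈ Fs')).card : ℂ) with hc₂
  have hsum3 : ∑ Q ∈ Fs, ∑ Q' ∈ Fs', (Q * Q').trace = (2:ℂ)^n * (c₁ - c₂) := by
    have hpt : ∀ Q ∈ Fs, ∀ Q' ∈ Fs', (Q * Q').trace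
        = (if Q = Q' then (2:ℂ)^n else 0) - (if -Q = Q' then (2:ℂ)^n else 0) := by
      intro Q hQ Q' hQ'
      rw [trace_signed_mul (hmemS Q hQ) (hmemS' Q' hQ')]
      by_cases h1 : Q = Q'
      · subst h1
        rw [if_pos rfl, if_pos rfl, if_neg (signed_neg_ne (hmemS Q hQ)), sub_zero]
      · rw [if_neg h1, if_neg h1]
        by_cases h3 : Q = -Q'
        · rw [if_pos (neg_eq_iff_eq_neg.mpr h3), if_pos h3]
          ring
        · rw [if_neg h3, if_neg (fun h => h3 (neg_eq_iff_eq_neg.mp h)), sub_zero]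
    calc ∑ Q ∈ Fs, ∑ Q' ∈ Fs', (Q * Q').trace
        = ∑ Q ∈ Fs, ∑ Q' ∈ Fs',
            ((if Q = Q' then (2:ℂ)^n else 0) - (if -Q = Q' then (2:ℂ)^n else 0)) :=
          Finset.sum_congr rfl fun Q hQ => Finset.sum_congr rfl fun Q' hQ' => hpt Q hQ Q' hQ'
      _ = ∑ Q ∈ Fs, ((if Q ∈ Fs' then (2:ℂ)^n else 0) - (if -Q ∈ Fs' then (2:ℂ)^n else 0)) := by
          refine Finset.sum_congr rfl fun Q hQ => ?_
          rw [Finset.sum_sub_distrib, Finset.sum_ite_eq, Finset.sum_ite_eq]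
      _ = (∑ Q ∈ Fs, if Q ∈ Fs' then (2:ℂ)^n else 0)
            - ∑ Q ∈ Fs, if -Q ∈ Fs' then (2:ℂ)^n else 0 := Finset.sum_sub_distrib _ _
      _ = (2:ℂ)^n * (c₁ - c₂) := by
          rw [← Finset.sum_filter, ← Finset.sum_filter, Finset.sum_const, Finset.sum_const]
          simp [hc₁, hc₂, mul_comm]
          ring
  -- combine inner sums
  have hA : ∑ a : Fin n → Fin 4,
      (pauliTensor a * stabState S).trace * (pauliTensor a * stabState S').trace
      = c₁ - c₂ := by
    simp_rw [hmid]
    rw [← Finset.mul_sum, hsum2]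
    simp_rw [← Finset.mul_sum]
    rw [hsum3]
    field_simp
  -- cardinalities
  have hcard1 : ((S ∩ S').ncard : ℂ) = c₁ := by
    rw [hc₁]
    norm_cast
    rw [← Set.ncard_coe_finset]
    congr 1
    ext x
    simp [hFs, hFs']
  have hcard2 : ((S ∩ ((fun Q => -Q) '' S')).ncard : ℂ) = c₂ := by
    rw [hc₂]
    norm_cast
    rw [← Set.ncard_coe_finset]
    congr 1
    ext x
    simp only [Finset.coe_filter, Set.mem_inter_iff, Set.mem_image, Set.mem_setOf_eq,
      hFs, hFs', Set.Finite.mem_toFinset]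
    constructor
    · rintro ⟨hx, y, hy, rfl⟩
      exact ⟨hx, by simpa using hy⟩
    · rintro ⟨hx, hnx⟩
      exact ⟨hx, -x, hnx, by simp⟩
  -- finish
  have hone : ((1:ℂ) : ℂ) ≠ -1 := by norm_num
  rw [Finset.sum_pair hone]
  simp only [one_smul, neg_smul, Matrix.neg_mul, Matrix.trace_neg, neg_mul_neg, one_mul]
  rw [hA, hcard1, hcard2]
  have h4 : (4:ℂ)^n = 2^n * 2^n := by rw [← mul_pow]; norm_num
  have h4n : (4:ℂ)^n ≠ 0 := by rw [h4]; exact mul_ne_zero h2 h2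
  field_simp
  ring
end
end

section
/- Let n ≥ 1. Let ρ := (e₀e₀*)^{⊗n} be the n-fold Kronecker power of the 2×2 matrix !![1,0;0,0], and let ρ' := (e₀e₀*)^{⊗(n−1)} ⊗ ((1/2)·!![1,1;1,1]) (i.e., the state |0⟩⟨0|^{⊗(n−1)} ⊗ |+⟩⟨+|). Then (1/(2·4^n)) · Σ_{(ε,a)} tr(P_{ε,a} · ρ) · tr(P_{ε,a} · ρ') = 2^{-(n+1)}, where the sum ranges over all pairs (ε,a) with ε ∈ {1,−1} and a : Fin n → Fin 4. In particular the correlation bound 2^{-(n+1)} between distinct stabilizer states under the uniform distribution on Pauli measurements is attained. -/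
open Matrix

noncomputable section

/-- The single-qubit state `|0⟩⟨0|`. -/
def ketZero : Matrix (Fin 2) (Fin 2) ℂ := !![1, 0; 0, 0]

/-- The single-qubit state `|+⟩⟨+|`. -/
def ketPlus : Matrix (Fin 2) (Fin 2) ℂ := (2 : ℂ)⁻¹ • !![1, 1; 1, 1]

/-- The `n`-qubit product state `τ₁ ⊗ ⋯ ⊗ τₙ` as a matrix indexed by bit strings. -/
def prodState {n : ℕ} (τ : Fin n → Matrix (Fin 2) (Fin 2) ℂ) :
    Matrix (Fin n → Fin 2) (Fin n → Fin 2) ℂ :=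
  Matrix.of fun z w => ∏ i, τ i (z i) (w i)

lemma trace_mul_tensor {n : ℕ} (a : Fin n → Fin 4) (τ : Fin n → Matrix (Fin 2) (Fin 2) ℂ) :
    (pauliTensor a * prodState τ).trace = ∏ i, (pauli (a i) * τ i).trace := by
  calc (pauliTensor a * prodState τ).trace
      = ∑ z : Fin n → Fin 2, ∑ w : Fin n → Fin 2,
          ∏ i, pauli (a i) (z i) (w i) * τ i (w i) (z i) := by
        simp [Matrix.trace, Matrix.diag, Matrix.mul_apply, pauliTensor, prodState,
          Finset.prod_mul_distrib]
    _ = ∑ g : Fin n → Fin 2 × Fin 2,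
          ∏ i, pauli (a i) ((g i).1) ((g i).2) * τ i ((g i).2) ((g i).1) := by
        rw [← Fintype.sum_prod_type']
        exact (Fintype.sum_equiv (Equiv.arrowProdEquivProdArrow (Fin n) (fun _ => Fin 2) (fun _ => Fin 2))
          (fun g => ∏ i, pauli (a i) ((g i).1) ((g i).2) * τ i ((g i).2) ((g i).1))
          (fun p => ∏ i, pauli (a i) (p.1 i) (p.2 i) * τ i (p.2 i) (p.1 i))
          (fun g => rfl)).symm
    _ = ∏ i, ∑ p : Fin 2 × Fin 2, pauli (a i) p.1 p.2 * τ i p.2 p.1 := by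
        rw [Finset.prod_univ_sum]
        rfl
    _ = ∏ i, (pauli (a i) * τ i).trace := by
        simp [Matrix.trace, Matrix.diag, Matrix.mul_apply, Fintype.sum_prod_type, mul_comm]

lemma sumZZ : ∑ k : Fin 4, (pauli k * ketZero).trace * (pauli k * ketZero).trace = 2 := by
  simp [Fin.sum_univ_four, pauli, ketZero, Matrix.trace, Matrix.diag, Matrix.mul_apply,
    Fin.sum_univ_two]
  norm_num

lemma sumZP : ∑ k : Fin 4, (pauli k * ketZero).trace * (pauli k * ketPlus).trace = 1 := by
  simp [Fin.sum_univ_four, pauli, ketZero, ketPlus, Matrix.trace, Matrix.diag, Matrix.mul_apply,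
    Fin.sum_univ_two]
  norm_num

/-- The correlation bound `2^{-(n+1)}` between distinct stabilizer states under the uniform
distribution on Pauli measurements is attained by `|0⟩⟨0|^{⊗n}` and
`|0⟩⟨0|^{⊗(n−1)} ⊗ |+⟩⟨+|`. -/
theorem correlation_bound_tight {n : ℕ} (hn : 1 ≤ n) :
    (1 / (2 * 4 ^ n) : ℂ) *
        ∑ ε ∈ ({1, -1} : Finset ℂ), ∑ a : Fin n → Fin 4,
          ((ε • pauliTensor a) * prodState (fun _ => ketZero)).trace *
            ((ε • pauliTensor a) *
              prodState (fun i => if (i : ℕ) = n - 1 then ketPlus else ketZero)).trace =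
      ((2 : ℂ) ^ (n + 1))⁻¹ := by
  have hkey : ∀ ε : ℂ, ∑ a : Fin n → Fin 4,
      ((ε • pauliTensor a) * prodState (fun _ => ketZero)).trace *
        ((ε • pauliTensor a) *
          prodState (fun i : Fin n => if (i : ℕ) = n - 1 then ketPlus else ketZero)).trace
      = ε * ε * 2 ^ (n - 1) := by
    intro ε
    have : ∀ a : Fin n → Fin 4,
        ((ε • pauliTensor a) * prodState (fun _ => ketZero)).trace *
          ((ε • pauliTensor a) *
            prodState (fun i : Fin n => if (i : ℕ) = n - 1 then ketPlus else ketZero)).trace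
        = ε * ε * ∏ i, ((pauli (a i) * ketZero).trace *
            (pauli (a i) * (if (i : ℕ) = n - 1 then ketPlus else ketZero)).trace) := by
      intro a
      rw [Matrix.smul_mul, Matrix.smul_mul, Matrix.trace_smul, Matrix.trace_smul,
        trace_mul_tensor, trace_mul_tensor, Finset.prod_mul_distrib]
      simp [smul_eq_mul]; ring
    simp_rw [this, ← Finset.mul_sum]
    congr 1
    have hswap := Finset.prod_univ_sum (fun _ : Fin n => (Finset.univ : Finset (Fin 4)))
      (fun i k => (pauli k * ketZero).trace *
        (pauli k * (if (i : ℕ) = n - 1 then ketPlus else ketZero)).trace)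
    rw [← Fintype.piFinset_univ, ← hswap]
    have hj : ∀ i : Fin n,
        ∑ k : Fin 4, (pauli k * ketZero).trace *
          (pauli k * (if (i : ℕ) = n - 1 then ketPlus else ketZero)).trace
        = if (i : ℕ) = n - 1 then 1 else 2 := by
      intro i
      by_cases h : (i : ℕ) = n - 1 <;> simp [h, sumZZ, sumZP]
    simp_rw [hj]
    set j : Fin n := ⟨n - 1, by omega⟩ with hjdef
    have hcond : ∀ i : Fin n, ((i : ℕ) = n - 1) ↔ i = j := by
      intro i
      constructor
      · intro h; exact Fin.ext h
      · intro h; rw [h]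
    simp_rw [hcond]
    rw [← Finset.mul_prod_erase Finset.univ _ (Finset.mem_univ j)]
    rw [if_pos rfl, one_mul, Finset.prod_ite_of_false, Finset.prod_const]
    · rw [Finset.card_erase_of_mem (Finset.mem_univ j), Finset.card_univ, Fintype.card_fin]
    · intro i hi
      exact Finset.ne_of_mem_erase hi
  rw [Finset.sum_pair (by norm_num : (1 : ℂ) ≠ -1), hkey, hkey]
  have h2 : (1 * 1 * (2 : ℂ) ^ (n - 1) + -1 * -1 * 2 ^ (n - 1)) = 2 ^ n := by
    have : (2 : ℂ) ^ (n - 1) * 2 = 2 ^ n := by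
      rw [← pow_succ]; congr 1; omega
    rw [← this]; ring
  have h4 : (2 * 4 ^ n : ℂ) = 2 ^ n * 2 ^ (n + 1) := by
    rw [show (4 : ℂ) = 2 * 2 by norm_num, mul_pow, pow_succ]; ring
  have hne : (2 : ℂ) ^ n ≠ 0 := pow_ne_zero _ two_ne_zero
  rw [h2, h4, one_div, mul_inv]
  rw [mul_comm ((2 : ℂ) ^ n)⁻¹, mul_assoc, inv_mul_cancel₀ hne, mul_one]
end
end
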